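/- Let r̂ : E → R × R, written r̂(e) = (ê⁺, ê⁻), be a pre-reduction map for 𝒮, i.e.: (a) for all X ∈ ℛ and e ∈ E, ê⁻ ∈ X implies ê⁺ ∈ X; and (b) 𝒮 = { { e ∈ E : ê⁺ ∈ X and ê⁻ ∉ X } : X ∈ ℛ }. Then: (1) Π(ê⁺) ⪯ Π(ê⁻) for every e ∈ E; and (2) 𝒮 = { { e ∈ E : Π(ê⁺) ∈ I ∪ {X_⊥} and Π(ê⁻) ∉ I ∪ {X_⊥} } : I a downward closed subset of (Π*, ⪯) }. -/

import Mathlib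

lemma aux_sInter {R : Type*} (F : Set (Set R)) (hF : ∀ A ∈ F, ∀ B ∈ F, A ∩ B ∈ F)
    (T : Set (Set R)) (hT : T.Finite) : T ⊆ F → T.Nonempty → ⋂₀ T ∈ F := by
  refine Set.Finite.induction_on (motive := fun T _ => T ⊆ F → T.Nonempty → ⋂₀ T ∈ F) T hT
    (fun _ hne => by simp at hne) ?_
  intro a s ha hs ih hsub _
  rcases s.eq_empty_or_nonempty with h | h
  · subst h; simpa using hsub (Set.mem_insert a ∅)
  · rw [Set.sInter_insert]
    exact hF a (hsub (Set.mem_insert a s)) _ (ih (fun x hx => hsub (Set.mem_insert_of_mem a hx)) h)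

lemma aux_sUnion {R : Type*} (F : Set (Set R)) (hF : ∀ A ∈ F, ∀ B ∈ F, A ∪ B ∈ F)
    (T : Set (Set R)) (hT : T.Finite) : T ⊆ F → T.Nonempty → ⋃₀ T ∈ F := by
  refine Set.Finite.induction_on (motive := fun T _ => T ⊆ F → T.Nonempty → ⋃₀ T ∈ F) T hT
    (fun _ hne => by simp at hne) ?_
  intro a s ha hs ih hsub _
  rcases s.eq_empty_or_nonempty with h | h
  · subst h; simpa using hsub (Set.mem_insert a ∅)
  · rw [Set.sUnion_insert]
    exact hF a (hsub (Set.mem_insert a s)) _ (ih (fun x hx => hsub (Set.mem_insert_of_mem a hx)) h)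

/-- The partial order `⪯` on the partition `Π = Π* ∪ {X_⊥, R \ X_⊤}`:
for blocks `A, B ∈ Π*`, `A ⪯ B` iff every `Z ∈ ℛ` containing `B` also contains `A`;
moreover `X_⊥ ⪯ C ⪯ R \ X_⊤` for every block `C` (and `⪯` is reflexive). -/
def PiLe {R : Type*} (ℛ : Set (Set R)) (Pstar : Set (Set R)) (Xbot Xtop : Set R)
    (A B : Set R) : Prop :=
  A = B ∨ A = Xbot ∨ B = Xtopᶜ ∨
    (A ∈ Pstar ∧ B ∈ Pstar ∧ ∀ Z ∈ ℛ, B ⊆ Z → A ⊆ Z)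

/-- Let `r̂ : E → R × R` be a pre-reduction map for `𝒮` w.r.t. the ring
family `ℛ`. Then (1) `Π(ê⁺) ⪯ Π(ê⁻)` for every `e ∈ E`, and (2) `𝒮` is the family of
sets `{ e : Π(ê⁺) ∈ I ∪ {X_⊥}, Π(ê⁻) ∉ I ∪ {X_⊥} }` over all downward closed subsets
`I` of `(Π*, ⪯)`. -/
theorem stmt_9 {R E : Type*} [Fintype R] [Fintype E]
    (ℛ : Set (Set R)) (hRne : ℛ.Nonempty)
    (hcup : ∀ X ∈ ℛ, ∀ Y ∈ ℛ, X ∪ Y ∈ ℛ)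
    (hcap : ∀ X ∈ ℛ, ∀ Y ∈ ℛ, X ∩ Y ∈ ℛ)
    (Xbot Xtop : Set R) (hXbot : Xbot = ⋂₀ ℛ) (hXtop : Xtop = ⋃₀ ℛ)
    (hbotne : Xbot.Nonempty) (htopproper : Xtop ≠ Set.univ)
    -- a maximal chain `X_⊥ = X₀ ⊊ X₁ ⊊ ⋯ ⊊ X_n = X_⊤` in `ℛ`:
    (n : ℕ) (X : Fin (n + 1) → Set R)
    (hX0 : X 0 = Xbot) (hXlast : X (Fin.last n) = Xtop)
    (hXmem : ∀ i, X i ∈ ℛ)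
    (hXchain : ∀ i : Fin n, X i.castSucc ⊂ X i.succ)
    (hXmax : ∀ i : Fin n, ∀ Z ∈ ℛ, ¬(X i.castSucc ⊂ Z ∧ Z ⊂ X i.succ))
    -- `Π* := { X_i \ X_{i−1} }` and the block map `x ↦ Π(x)`:
    (Pstar : Set (Set R)) (hPstar : Pstar = {B | ∃ i : Fin n, B = X i.succ \ X i.castSucc})
    (pi : R → Set R)
    (hpi : ∀ x : R, pi x ∈ Pstar ∪ {Xbot, Xtopᶜ} ∧ x ∈ pi x)
    -- the pre-reduction map `r̂` for `𝒮`: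
    (𝒮 : Set (Set E)) (rh : E → R × R)
    (hpre1 : ∀ Z ∈ ℛ, ∀ e : E, (rh e).2 ∈ Z → (rh e).1 ∈ Z)
    (hpre2 : 𝒮 = {S | ∃ Z ∈ ℛ, S = {e | (rh e).1 ∈ Z ∧ (rh e).2 ∉ Z}}) :
    (∀ e : E, PiLe ℛ Pstar Xbot Xtop (pi (rh e).1) (pi (rh e).2)) ∧
    𝒮 = {S | ∃ I : Set (Set R), I ⊆ Pstar ∧
      (∀ A B : Set R, B ∈ I → A ∈ Pstar → (∀ Z ∈ ℛ, B ⊆ Z → A ⊆ Z) → A ∈ I) ∧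
      S = {e | pi (rh e).1 ∈ I ∪ {Xbot} ∧ pi (rh e).2 ∉ I ∪ {Xbot}}} := by
  have hXbotR : Xbot ∈ ℛ := hX0 ▸ hXmem 0
  have hXtopR : Xtop ∈ ℛ := hXlast ▸ hXmem (Fin.last n)
  have hsm : StrictMono X := Fin.strictMono_iff_lt_succ.mpr (fun i => hXchain i)
  have hmono : Monotone X := hsm.monotone
  have hbotsub : ∀ Z ∈ ℛ, Xbot ⊆ Z := fun Z hZ => hXbot ▸ Set.sInter_subset_of_mem hZ
  have hsubtop : ∀ Z ∈ ℛ, Z ⊆ Xtop := fun Z hZ => hXtop ▸ Set.subset_sUnion_of_mem hZ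
  -- every block of Π* is inside or disjoint from each member of ℛ
  have hblock : ∀ Z ∈ ℛ, ∀ i : Fin n, ∀ x, x ∈ X i.succ \ X i.castSucc → x ∈ Z →
      X i.succ \ X i.castSucc ⊆ Z := by
    intro Z hZ i x hx hxZ
    set Z' := Z ∩ X i.succ ∪ X i.castSucc with hZ'def
    have hZ'R : Z' ∈ ℛ := hcup _ (hcap Z hZ _ (hXmem i.succ)) _ (hXmem i.castSucc)
    have h1 : X i.castSucc ⊆ Z' := Set.subset_union_right
    have h2 : Z' ⊆ X i.succ := Set.union_subset Set.inter_subset_right (hXchain i).subset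
    have hne1 : Z' ≠ X i.castSucc := by
      intro h
      have hm : x ∈ Z' := Or.inl ⟨hxZ, hx.1⟩
      rw [h] at hm; exact hx.2 hm
    have h3 : Z' = X i.succ := by
      by_contra h3
      exact hXmax i Z' hZ'R ⟨ssubset_of_subset_of_ne h1 (Ne.symm hne1),
        ssubset_of_subset_of_ne h2 h3⟩
    intro y hy
    have hm : y ∈ Z' := h3 ▸ hy.1
    rcases hm with h | h
    · exact h.1
    · exact absurd h hy.2
  -- membership in a member of ℛ is determined by the block
  have hkey : ∀ Z ∈ ℛ, ∀ x : R, x ∈ Z ↔ ((pi x ∈ Pstar ∧ pi x ⊆ Z) ∨ pi x = Xbot) := by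
    intro Z hZ x
    constructor
    · intro hxZ
      rcases (hpi x).1 with hP | hO
      · have hP' := hP
        rw [hPstar] at hP'
        obtain ⟨i, hi⟩ := hP'
        refine Or.inl ⟨hP, ?_⟩
        rw [hi]
        refine hblock Z hZ i x ?_ hxZ
        rw [← hi]; exact (hpi x).2
      · simp only [Set.mem_insert_iff, Set.mem_singleton_iff] at hO
        rcases hO with h | h
        · exact Or.inr h
        · exfalso
          have hx : x ∈ Xtopᶜ := by rw [← h]; exact (hpi x).2
          exact hx (hsubtop Z hZ hxZ)
    · rintro (⟨_, hsub⟩ | hb)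
      · exact hsub (hpi x).2
      · refine hbotsub Z hZ ?_
        rw [← hb]; exact (hpi x).2
  have hbotchar : ∀ x : R, x ∈ Xbot ↔ pi x = Xbot := by
    intro x
    constructor
    · intro hx
      rcases (hkey Xbot hXbotR x).1 hx with ⟨hP, _⟩ | h
      · exfalso
        have hP' := hP
        rw [hPstar] at hP'
        obtain ⟨i, hi⟩ := hP'
        have hx2 : x ∈ X i.succ \ X i.castSucc := by rw [← hi]; exact (hpi x).2
        have hss : Xbot ⊆ X i.castSucc := by
          rw [← hX0]; exact hmono (Fin.zero_le _)
        exact hx2.2 (hss hx)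
      · exact h
    · intro h; rw [← h]; exact (hpi x).2
  constructor
  · -- Part (1)
    intro e
    rcases (hpi (rh e).2).1 with hQ | hO
    · have hQ' := hQ
      rw [hPstar] at hQ'
      obtain ⟨j, hj⟩ := hQ'
      have hq : (rh e).2 ∈ X j.succ \ X j.castSucc := by rw [← hj]; exact (hpi (rh e).2).2
      rcases (hpi (rh e).1).1 with hP | hO'
      · have hP' := hP
        rw [hPstar] at hP'
        obtain ⟨i, hi⟩ := hP'
        refine Or.inr (Or.inr (Or.inr ⟨hP, hQ, ?_⟩))
        intro Z hZ hsub
        have hpZ : (rh e).1 ∈ Z := hpre1 Z hZ e (hsub (hpi (rh e).2).2)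
        rw [hi]
        refine hblock Z hZ i _ ?_ hpZ
        rw [← hi]; exact (hpi (rh e).1).2
      · simp only [Set.mem_insert_iff, Set.mem_singleton_iff] at hO'
        rcases hO' with h | h
        · exact Or.inr (Or.inl h)
        · exfalso
          have hp : (rh e).1 ∈ Xtopᶜ := by rw [← h]; exact (hpi (rh e).1).2
          have hpt : (rh e).1 ∈ X j.succ := hpre1 _ (hXmem j.succ) e hq.1
          exact hp (hsubtop _ (hXmem j.succ) hpt)
    · simp only [Set.mem_insert_iff, Set.mem_singleton_iff] at hO
      rcases hO with h | h
      · have hq : (rh e).2 ∈ Xbot := by rw [← h]; exact (hpi (rh e).2).2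
        have hp : (rh e).1 ∈ Xbot := hpre1 _ hXbotR e hq
        exact Or.inr (Or.inl ((hbotchar _).1 hp))
      · exact Or.inr (Or.inr (Or.inl h))
  · -- Part (2)
    rw [hpre2]
    ext S
    simp only [Set.mem_setOf_eq]
    constructor
    · rintro ⟨Z, hZ, rfl⟩
      refine ⟨{D | D ∈ Pstar ∧ D ⊆ Z}, fun D hD => hD.1, ?_, ?_⟩
      · intro A B hB hA himp
        exact ⟨hA, himp Z hZ hB.2⟩
      · ext e
        simp only [Set.mem_setOf_eq, Set.mem_union, Set.mem_singleton_iff]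
        rw [hkey Z hZ (rh e).1, hkey Z hZ (rh e).2]
    · rintro ⟨I, hIP, hdc, rfl⟩
      set minZ : Set R → Set R := fun D => ⋂₀ {W | W ∈ ℛ ∧ D ⊆ W} with hminZdef
      have hmin : ∀ D ∈ Pstar, minZ D ∈ ℛ ∧ D ⊆ minZ D := by
        intro D hD
        rw [hPstar] at hD
        obtain ⟨i, hi⟩ := hD
        have hDtop : D ⊆ Xtop := by
          rw [hi, ← hXlast]
          exact Set.diff_subset.trans (hmono (Fin.le_last _))
        have hmem : minZ D ∈ {W | W ∈ ℛ ∧ D ⊆ W} := by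
          refine aux_sInter _ ?_ _ (Set.toFinite _) (fun W hW => hW) ⟨Xtop, hXtopR, hDtop⟩
          rintro A ⟨hA1, hA2⟩ B ⟨hB1, hB2⟩
          exact ⟨hcap A hA1 B hB1, Set.subset_inter hA2 hB2⟩
        exact ⟨hmem.1, hmem.2⟩
      set Z := ⋃₀ (insert Xbot (minZ '' I)) with hZdef
      have hZR : Z ∈ ℛ := by
        refine aux_sUnion ℛ hcup _ (Set.toFinite _) ?_ ⟨Xbot, Set.mem_insert _ _⟩
        rintro W hW
        rcases hW with rfl | ⟨D, hD, rfl⟩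
        · exact hXbotR
        · exact (hmin D (hIP hD)).1
      have hch : ∀ x : R, x ∈ Z ↔ (pi x ∈ I ∨ pi x = Xbot) := by
        intro x
        constructor
        · rintro ⟨W, hW, hxW⟩
          rcases hW with rfl | ⟨D, hD, rfl⟩
          · exact Or.inr ((hbotchar x).1 hxW)
          · rcases (hkey _ (hmin D (hIP hD)).1 x).1 hxW with ⟨hP, hsub⟩ | hb
            · refine Or.inl (hdc (pi x) D hD hP ?_)
              intro W' hW' hDW'
              exact hsub.trans (Set.sInter_subset_of_mem ⟨hW', hDW'⟩)
            · exact Or.inr hb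
        · rintro (hI | hb)
          · exact ⟨minZ (pi x), Set.mem_insert_of_mem _ ⟨pi x, hI, rfl⟩,
              (hmin _ (hIP hI)).2 (hpi x).2⟩
          · refine ⟨Xbot, Set.mem_insert _ _, ?_⟩
            rw [← hb]; exact (hpi x).2
      refine ⟨Z, hZR, ?_⟩
      ext e
      simp only [Set.mem_setOf_eq, Set.mem_union, Set.mem_singleton_iff]
      rw [hch (rh e).1, hch (rh e).2]
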